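/- arXiv:2009.12029 — 6 statements merged into one kernel-verified Lean document; each statement's English description precedes it below -/
import Mathlib

section
/- Let n ≥ 1, let α ∈ (0,1], and let W be a column-stochastic n×n real matrix that has at least one row r with W_{r,i} ≥ α for every column index i. Then for every x ∈ ℝⁿ and y defined by yᵀ = xᵀ W (i.e., y_i = Σ_j x_j W_{j,i}), one has osc(y) ≤ (1 − α)·osc(x). -/
open Finset

/-- The oscillation of a vector: `osc(x) = max_i x_i − min_i x_i`. -/
noncomputable def osc {n : ℕ} (x : Fin n → ℝ) : ℝ := (⨆ i, x i) - (⨅ i, x i)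

/-- If a column-stochastic matrix `W` has a row `r` with all entries at least `α`,
then `yᵀ = xᵀ W` satisfies `osc(y) ≤ (1 − α)·osc(x)`. -/
theorem stmt_2 (n : ℕ) (hn : 1 ≤ n) (α : ℝ) (hα : α ∈ Set.Ioc (0 : ℝ) 1)
    (W : Matrix (Fin n) (Fin n) ℝ)
    (hnonneg : ∀ j i, 0 ≤ W j i) (hcol : ∀ i, ∑ j, W j i = 1)
    (r : Fin n) (hrow : ∀ i, α ≤ W r i)
    (x y : Fin n → ℝ) (hy : ∀ i, y i = ∑ j, x j * W j i) :
    osc y ≤ (1 - α) * osc x := by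
  haveI : Nonempty (Fin n) := Fin.pos_iff_nonempty.mp hn
  obtain ⟨hα0, hα1⟩ := hα
  set M := ⨆ i, x i with hMdef
  set m := ⨅ i, x i with hmdef
  have hM : ∀ j, x j ≤ M := fun j =>
    le_ciSup (Set.Finite.bddAbove (Set.finite_range x)) j
  have hm : ∀ j, m ≤ x j := fun j =>
    ciInf_le (Set.Finite.bddBelow (Set.finite_range x)) j
  have h1 : ∀ i, y i ≤ M - α * (M - x r) := by
    intro i
    have key : α * (M - x r) ≤ ∑ j, (M - x j) * W j i := by
      calc α * (M - x r) ≤ (M - x r) * W r i := by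
            nlinarith [hrow i, hM r]
        _ ≤ ∑ j, (M - x j) * W j i :=
            Finset.single_le_sum
              (fun j _ => mul_nonneg (sub_nonneg.2 (hM j)) (hnonneg j i))
              (mem_univ r)
    have heq : ∑ j, (M - x j) * W j i = M - ∑ j, x j * W j i := by
      simp only [sub_mul, Finset.sum_sub_distrib, ← Finset.mul_sum, hcol i, mul_one]
    rw [hy]
    linarith
  have h2 : ∀ i, m + α * (x r - m) ≤ y i := by
    intro i
    have key : α * (x r - m) ≤ ∑ j, (x j - m) * W j i := by
      calc α * (x r - m) ≤ (x r - m) * W r i := by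
            nlinarith [hrow i, hm r]
        _ ≤ ∑ j, (x j - m) * W j i :=
            Finset.single_le_sum
              (fun j _ => mul_nonneg (sub_nonneg.2 (hm j)) (hnonneg j i))
              (mem_univ r)
    have heq : ∑ j, (x j - m) * W j i = (∑ j, x j * W j i) - m := by
      simp only [sub_mul, Finset.sum_sub_distrib, ← Finset.mul_sum, hcol i, mul_one]
    rw [hy]
    linarith
  have hsup : (⨆ i, y i) ≤ M - α * (M - x r) := ciSup_le h1
  have hinf : m + α * (x r - m) ≤ ⨅ i, y i := le_ciInf h2
  simp only [osc]
  linarith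
end

section
/- Let n ≥ 1 and m ≥ 1, and for each t ∈ {1,…,m} let W_t be a column-stochastic n×n real matrix having at least one row r_t with (W_t)_{r_t,i} ≥ α_t for every column index i, where α_t ∈ (0,1]. Set T = W_m · W_{m−1} ⋯ W_1. Then for every x ∈ ℝⁿ and y defined by yᵀ = xᵀ T, one has osc(y) ≤ (∏_{t=1}^m (1 − α_t))·osc(x). -/
open Finset

lemma osc_nonneg {n : ℕ} (hn : 0 < n) (x : Fin n → ℝ) : 0 ≤ osc x := by
  haveI : Nonempty (Fin n) := ⟨⟨0, hn⟩⟩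
  have h1 : (⨅ i, x i) ≤ x ⟨0, hn⟩ := ciInf_le (Set.Finite.bddBelow (Set.finite_range x)) _
  have h2 : x ⟨0, hn⟩ ≤ ⨆ i, x i := le_ciSup (Set.Finite.bddAbove (Set.finite_range x)) _
  simp only [osc]; linarith

lemma osc_step {n : ℕ} (hn : 0 < n) (Wm : Matrix (Fin n) (Fin n) ℝ) (a : ℝ)
    (ha : 0 < a) (hnn : ∀ j i, 0 ≤ Wm j i) (hc : ∀ i, ∑ j, Wm j i = 1)
    (r : Fin n) (hr : ∀ i, a ≤ Wm r i) (x : Fin n → ℝ) :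
    osc (fun i => ∑ j, x j * Wm j i) ≤ (1 - a) * osc x := by
  haveI : Nonempty (Fin n) := ⟨⟨0, hn⟩⟩
  set M := ⨆ i, x i with hM
  set mm := ⨅ i, x i with hmm
  have hMle : ∀ i, x i ≤ M := fun i => le_ciSup (Set.Finite.bddAbove (Set.finite_range x)) i
  have hmle : ∀ i, mm ≤ x i := fun i => ciInf_le (Set.Finite.bddBelow (Set.finite_range x)) i
  have hosc : osc x = M - mm := rfl
  have hMm : 0 ≤ M - mm := by have := osc_nonneg hn x; linarith
  set y : Fin n → ℝ := fun i => ∑ j, x j * Wm j i with hy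
  have key : ∀ i i', y i - y i' ≤ (1 - a) * (M - mm) := by
    intro i i'
    set c : Fin n → ℝ := fun j => min (Wm j i) (Wm j i') with hc'
    set S := ∑ j, c j with hS
    have hSa : a ≤ S := by
      have : a ≤ c r := le_min (hr i) (hr i')
      calc a ≤ c r := this
        _ ≤ S := Finset.single_le_sum (f := c) (fun j _ => le_min (hnn j i) (hnn j i')) (mem_univ r)
    have h1 : y i ≤ ∑ j, c j * x j + (1 - S) * M := by
      have : y i = ∑ j, c j * x j + ∑ j, (Wm j i - c j) * x j := by
        rw [← Finset.sum_add_distrib]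
        apply Finset.sum_congr rfl; intro j _; ring
      rw [this]
      have hb : ∑ j, (Wm j i - c j) * x j ≤ ∑ j, (Wm j i - c j) * M := by
        apply Finset.sum_le_sum; intro j _
        exact mul_le_mul_of_nonneg_left (hMle j) (by simp [hc'])
      have he : ∑ j, (Wm j i - c j) * M = (1 - S) * M := by
        rw [← Finset.sum_mul, Finset.sum_sub_distrib, hc i]
      linarith
    have h2 : ∑ j, c j * x j + (1 - S) * mm ≤ y i' := by
      have : y i' = ∑ j, c j * x j + ∑ j, (Wm j i' - c j) * x j := by
        rw [← Finset.sum_add_distrib]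
        apply Finset.sum_congr rfl; intro j _; ring
      rw [this]
      have hb : ∑ j, (Wm j i' - c j) * mm ≤ ∑ j, (Wm j i' - c j) * x j := by
        apply Finset.sum_le_sum; intro j _
        exact mul_le_mul_of_nonneg_left (hmle j) (by simp [hc'])
      have he : ∑ j, (Wm j i' - c j) * mm = (1 - S) * mm := by
        rw [← Finset.sum_mul, Finset.sum_sub_distrib, hc i']
      linarith
    have : y i - y i' ≤ (1 - S) * (M - mm) := by nlinarith
    have h3 : (1 - S) * (M - mm) ≤ (1 - a) * (M - mm) :=
      mul_le_mul_of_nonneg_right (by linarith) hMm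
    linarith
  have hyub : ∀ i, y i ≤ (⨅ i', y i') + (1 - a) * (M - mm) := by
    intro i
    have : y i - (1 - a) * (M - mm) ≤ ⨅ i', y i' := by
      apply le_ciInf; intro i'
      have := key i i'; linarith
    linarith
  have : (⨆ i, y i) ≤ (⨅ i', y i') + (1 - a) * (M - mm) := ciSup_le hyub
  simp only [osc]; rw [← hM, ← hmm]; linarith

lemma osc_list {n : ℕ} (hn : 0 < n) :
    ∀ (L : List (Matrix (Fin n) (Fin n) ℝ × ℝ)),
    (∀ p ∈ L, (0 < p.2 ∧ p.2 ≤ 1) ∧ (∀ j i, 0 ≤ p.1 j i) ∧ (∀ i, ∑ j, p.1 j i = 1) ∧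
      ∃ r, ∀ i, p.2 ≤ p.1 r i) →
    ∀ x : Fin n → ℝ,
    osc (fun i => ∑ j, x j * (L.map Prod.fst).prod j i) ≤ (L.map (fun p => 1 - p.2)).prod * osc x := by
  intro L
  induction L with
  | nil =>
    intro _ x
    simp only [List.map_nil, List.prod_nil]
    have : (fun i => ∑ j, x j * (1 : Matrix (Fin n) (Fin n) ℝ) j i) = x := by
      funext i
      rw [Finset.sum_eq_single i]
      · simp [Matrix.one_apply]
      · intro j _ hj; simp [Matrix.one_apply, hj]
      · simp
    rw [this]; simp
  | cons p L ih =>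
    intro hcond x
    obtain ⟨⟨ha0, ha1⟩, hnn, hc, r, hr⟩ := hcond p List.mem_cons_self
    set z : Fin n → ℝ := fun k => ∑ j, x j * p.1 j k with hz
    have hstep : osc z ≤ (1 - p.2) * osc x := osc_step hn p.1 p.2 ha0 hnn hc r hr x
    have hrw : (fun i => ∑ j, x j * ((p :: L).map Prod.fst).prod j i)
        = fun i => ∑ k, z k * (L.map Prod.fst).prod k i := by
      funext i
      simp only [List.map_cons, List.prod_cons, Matrix.mul_apply, hz]
      simp_rw [Finset.mul_sum, Finset.sum_mul]
      rw [Finset.sum_comm]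
      apply Finset.sum_congr rfl; intro k _
      apply Finset.sum_congr rfl; intro j _; ring
    rw [hrw]
    have ihz := ih (fun q hq => hcond q (List.mem_cons_of_mem _ hq)) z
    have hprodnn : 0 ≤ (L.map (fun p => 1 - p.2)).prod := by
      apply List.prod_nonneg
      intro b hb
      simp only [List.mem_map] at hb
      obtain ⟨q, hq, rfl⟩ := hb
      have := (hcond q (List.mem_cons_of_mem _ hq)).1.2
      linarith
    calc osc (fun i => ∑ k, z k * (L.map Prod.fst).prod k i)
        ≤ (L.map (fun p => 1 - p.2)).prod * osc z := ihz
      _ ≤ (L.map (fun p => 1 - p.2)).prod * ((1 - p.2) * osc x) :=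
          mul_le_mul_of_nonneg_left hstep hprodnn
      _ = ((p :: L).map (fun p => 1 - p.2)).prod * osc x := by
          simp [List.prod_cons]; ring

/-- For a product `T = W_m ⋯ W_1` of column-stochastic matrices, each of which has
some row bounded below by `α_t` in every column, `yᵀ = xᵀ T` satisfies
`osc(y) ≤ (∏_t (1 − α_t))·osc(x)`. -/
theorem stmt_3 (n m : ℕ) (hn : 1 ≤ n) (hm : 1 ≤ m)
    (W : Fin m → Matrix (Fin n) (Fin n) ℝ) (α : Fin m → ℝ)
    (hα : ∀ t, α t ∈ Set.Ioc (0 : ℝ) 1)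
    (hnonneg : ∀ t j i, 0 ≤ W t j i) (hcol : ∀ t i, ∑ j, W t j i = 1)
    (hrow : ∀ t, ∃ r, ∀ i, α t ≤ W t r i)
    (T : Matrix (Fin n) (Fin n) ℝ) (hT : T = ((List.ofFn W).reverse).prod)
    (x y : Fin n → ℝ) (hy : ∀ i, y i = ∑ j, x j * T j i) :
    osc y ≤ (∏ t, (1 - α t)) * osc x := by
  set L : List (Matrix (Fin n) (Fin n) ℝ × ℝ) :=
    (List.ofFn (fun t => (W t, α t))).reverse with hL
  have hmap1 : L.map Prod.fst = (List.ofFn W).reverse := by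
    rw [hL, List.map_reverse, List.map_ofFn]
    rfl
  have hmap2 : (L.map (fun p => 1 - p.2)).prod = ∏ t, (1 - α t) := by
    rw [hL, List.map_reverse, List.prod_reverse, List.map_ofFn, List.prod_ofFn]
    rfl
  have hcond : ∀ p ∈ L, (0 < p.2 ∧ p.2 ≤ 1) ∧ (∀ j i, 0 ≤ p.1 j i) ∧
      (∀ i, ∑ j, p.1 j i = 1) ∧ ∃ r, ∀ i, p.2 ≤ p.1 r i := by
    intro p hp
    rw [hL, List.mem_reverse, List.mem_ofFn] at hp
    obtain ⟨t, rfl⟩ := hp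
    exact ⟨⟨(hα t).1, (hα t).2⟩, hnonneg t, hcol t, hrow t⟩
  have := osc_list (by omega) L hcond x
  rw [hmap1, hmap2, ← hT] at this
  have hyeq : y = fun i => ∑ j, x j * T j i := funext hy
  rw [hyeq]
  exact this
end

section
/- Let n ≥ 2, N ≥ 1, α ∈ (0,1], and let (A_k)_{k≥1} be a sequence of column-stochastic n×n real matrices such that for every t ≥ 1 the block product W_t = A_{Nt} · A_{Nt−1} ⋯ A_{N(t−1)+1} has at least one row whose entries are all ≥ α. Let T_k = A_k · A_{k−1} ⋯ A_1. Then for every k ≥ 1 the coefficient of ergodicity satisfies δ(T_k) ≤ (1 − α)^{⌊k/N⌋}; in particular, if α < 1 then δ(T_k) → 0 as k → ∞, and if α = 1 then δ(T_k) = 0 for all k ≥ N. -/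
open Finset Filter Topology

/-- The coefficient of ergodicity of a matrix:
`δ(T) = max_j max_{i1,i2} |T_{j,i1} − T_{j,i2}|`. -/
noncomputable def ergCoeff {n : ℕ} (T : Matrix (Fin n) (Fin n) ℝ) : ℝ :=
  ⨆ j, ⨆ i1, ⨆ i2, |T j i1 - T j i2|

def ColStoch {n : ℕ} (M : Matrix (Fin n) (Fin n) ℝ) : Prop :=
  (∀ i j, 0 ≤ M i j) ∧ (∀ j, ∑ i, M i j = 1)

lemma colStoch_one {n : ℕ} : ColStoch (1 : Matrix (Fin n) (Fin n) ℝ) := by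
  constructor
  · intro i j
    by_cases h : i = j <;> simp [Matrix.one_apply, h]
  · intro j
    simp [Matrix.one_apply]

lemma colStoch_mul {n : ℕ} {M P : Matrix (Fin n) (Fin n) ℝ}
    (hM : ColStoch M) (hP : ColStoch P) : ColStoch (M * P) := by
  constructor
  · intro i j
    rw [Matrix.mul_apply]; exact Finset.sum_nonneg fun l _ => mul_nonneg (hM.1 i l) (hP.1 l j)
  · intro j
    rw [show ∑ i, (M * P) i j = ∑ l, (∑ i, M i l) * P l j by
      simp only [Matrix.mul_apply, Finset.sum_mul]
      rw [Finset.sum_comm]]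
    simp only [hM.2]
    simpa using hP.2 j

lemma colStoch_listProd {n : ℕ} (l : List (Matrix (Fin n) (Fin n) ℝ))
    (h : ∀ M ∈ l, ColStoch M) : ColStoch l.prod := by
  induction l with
  | nil => simpa using colStoch_one
  | cons a t ih =>
    rw [List.prod_cons]
    exact colStoch_mul (h a (by simp)) (ih fun M hM => h M (by simp [hM]))

lemma nonexpand {n : ℕ} {P : Matrix (Fin n) (Fin n) ℝ} (hP : ColStoch P)
    (u : Fin n → ℝ) : ∑ j, |(P.mulVec u) j| ≤ ∑ j, |u j| := by
  calc ∑ j, |(P.mulVec u) j| ≤ ∑ j, ∑ i, P j i * |u i| := by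
        apply Finset.sum_le_sum
        intro j _
        rw [Matrix.mulVec, dotProduct]
        refine le_trans (Finset.abs_sum_le_sum_abs _ _) ?_
        apply Finset.sum_le_sum
        intro i _
        rw [abs_mul, abs_of_nonneg (hP.1 j i)]
    _ = ∑ i, (∑ j, P j i) * |u i| := by rw [Finset.sum_comm]; simp [Finset.sum_mul]
    _ = ∑ j, |u j| := by simp [hP.2]

lemma contract {n : ℕ} {P : Matrix (Fin n) (Fin n) ℝ} (hP : ColStoch P)
    {α : ℝ} {r : Fin n} (hr : ∀ i, α ≤ P r i) (hα : α ≤ 1)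
    (u : Fin n → ℝ) (hu : ∑ j, u j = 0) :
    ∑ j, |(P.mulVec u) j| ≤ (1 - α) * ∑ j, |u j| := by
  set up : Fin n → ℝ := fun i => max (u i) 0 with hup
  set un : Fin n → ℝ := fun i => max (-u i) 0 with hun
  have hsplit : ∀ i, u i = up i - un i := fun i => by
    rcases le_total (u i) 0 with h | h
    · simp [hup, hun, max_eq_right h, max_eq_left (neg_nonneg.mpr h)]
    · simp [hup, hun, max_eq_left h, max_eq_right (neg_nonpos.mpr h)]
  have habs : ∀ i, |u i| = up i + un i := fun i => by
    rcases le_total (u i) 0 with h | h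
    · simp [hup, hun, abs_of_nonpos h, max_eq_right h, max_eq_left (neg_nonneg.mpr h)]
    · simp [hup, hun, abs_of_nonneg h, max_eq_left h, max_eq_right (neg_nonpos.mpr h)]
  have hupn : ∀ i, 0 ≤ up i := fun i => le_max_right _ _
  have hunn : ∀ i, 0 ≤ un i := fun i => le_max_right _ _
  set m := ∑ i, up i with hm
  have hmn : ∑ i, un i = m := by
    have : ∑ i, (up i - un i) = 0 := by
      rw [← hu]; exact Finset.sum_congr rfl fun i _ => (hsplit i).symm
    rw [Finset.sum_sub_distrib] at this
    linarith
  have hm0 : 0 ≤ m := Finset.sum_nonneg fun i _ => hupn i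
  set a : Fin n → ℝ := fun j => ∑ i, P j i * up i with ha
  set b : Fin n → ℝ := fun j => ∑ i, P j i * un i with hb
  have hPa : ∀ j, (P.mulVec u) j = a j - b j := fun j => by
    simp only [Matrix.mulVec, dotProduct, ha, hb, ← Finset.sum_sub_distrib]
    exact Finset.sum_congr rfl fun i _ => by rw [hsplit i]; ring
  have han : ∀ j, 0 ≤ a j := fun j =>
    Finset.sum_nonneg fun i _ => mul_nonneg (hP.1 j i) (hupn i)
  have hbn : ∀ j, 0 ≤ b j := fun j =>
    Finset.sum_nonneg fun i _ => mul_nonneg (hP.1 j i) (hunn i)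
  have hsa : ∑ j, a j = m := by
    simp only [ha]
    rw [Finset.sum_comm]
    simp only [← Finset.sum_mul]
    simp [hP.2, hm]
  have hsb : ∑ j, b j = m := by
    simp only [hb]
    rw [Finset.sum_comm]
    simp only [← Finset.sum_mul]
    simp [hP.2, hmn]
  have har : α * m ≤ a r := by
    rw [ha, hm]
    rw [Finset.mul_sum]
    exact Finset.sum_le_sum fun i _ => mul_le_mul_of_nonneg_right (hr i) (hupn i)
  have hbr : α * m ≤ b r := by
    rw [hb, ← hmn]
    rw [Finset.mul_sum]
    exact Finset.sum_le_sum fun i _ => mul_le_mul_of_nonneg_right (hr i) (hunn i)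
  have hmin : α * m ≤ ∑ j, min (a j) (b j) := by
    refine le_trans (le_min har hbr) ?_
    exact Finset.single_le_sum (fun j _ => le_min (han j) (hbn j)) (Finset.mem_univ r)
  have key : ∀ j, |a j - b j| = a j + b j - 2 * min (a j) (b j) := fun j => by
    rcases le_total (a j) (b j) with h | h
    · rw [abs_of_nonpos (by linarith), min_eq_left h]; ring
    · rw [abs_of_nonneg (by linarith), min_eq_right h]; ring
  have habsu : ∑ j, |u j| = 2 * m := by
    rw [Finset.sum_congr rfl fun i _ => habs i, Finset.sum_add_distrib, hmn, hm]; ring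
  calc ∑ j, |(P.mulVec u) j| = ∑ j, (a j + b j - 2 * min (a j) (b j)) := by
        exact Finset.sum_congr rfl fun j _ => by rw [hPa j, key j]
    _ = m + m - 2 * ∑ j, min (a j) (b j) := by
        rw [Finset.sum_sub_distrib, Finset.sum_add_distrib, hsa, hsb, Finset.mul_sum]
    _ ≤ m + m - 2 * (α * m) := by linarith
    _ = (1 - α) * (2 * m) := by ring
    _ = (1 - α) * ∑ j, |u j| := by rw [habsu]

/-- Deterministic core of Lemma 1: if each block product
`W_t = A_{Nt} ⋯ A_{N(t−1)+1}` of column-stochastic matrices has a row whose entries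
are all ≥ α, then the forward products `T_k = A_k ⋯ A_1` satisfy
`δ(T_k) ≤ (1 − α)^⌊k/N⌋`; in particular `δ(T_k) → 0` when `α < 1`, and
`δ(T_k) = 0` for `k ≥ N` when `α = 1`. -/
theorem stmt_5 (n N : ℕ) (hn : 2 ≤ n) (hN : 1 ≤ N)
    (α : ℝ) (hα : α ∈ Set.Ioc (0 : ℝ) 1)
    (A : ℕ → Matrix (Fin n) (Fin n) ℝ)
    (hnonneg : ∀ k, 1 ≤ k → ∀ i j, 0 ≤ A k i j)
    (hcol : ∀ k, 1 ≤ k → ∀ j, ∑ i, A k i j = 1)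
    (W : ℕ → Matrix (Fin n) (Fin n) ℝ)
    (hW : ∀ t, W t = ((List.range N).map (fun s => A (N * t - s))).prod)
    (hrow : ∀ t, 1 ≤ t → ∃ r, ∀ i, α ≤ W t r i)
    (T : ℕ → Matrix (Fin n) (Fin n) ℝ)
    (hT : ∀ k, T k = ((List.range k).map (fun s => A (k - s))).prod) :
    (∀ k, 1 ≤ k → ergCoeff (T k) ≤ (1 - α) ^ (k / N)) ∧
    (α < 1 → Tendsto (fun k => ergCoeff (T k)) atTop (𝓝 0)) ∧
    (α = 1 → ∀ k, N ≤ k → ergCoeff (T k) = 0) := by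
  obtain ⟨hα0, hα1⟩ := hα
  have hNpos : 0 < N := hN
  have hTsucc : ∀ k, T (k+1) = A (k+1) * T k := by
    intro k
    rw [hT (k+1), hT k, List.range_succ_eq_map, List.map_cons, List.map_map, List.prod_cons]
    have e0 : k + 1 - 0 = k + 1 := rfl
    rw [e0]
    congr 1
    refine congrArg List.prod (List.map_congr_left fun s _ => ?_)
    have e1 : k + 1 - (s+1) = k - s := by omega
    show A (k+1 - (s+1)) = A (k - s)
    rw [e1]
  have hTblock : ∀ t, T (N*(t+1)) = W (t+1) * T (N*t) := by
    intro t
    have h1 : N*(t+1) = N + N*t := by ring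
    simp only [hT, hW, h1]
    rw [List.range_add, List.map_append, List.prod_append, List.map_map]
    congr 1
    refine congrArg List.prod (List.map_congr_left fun s _ => ?_)
    have e1 : N + N*t - (N + s) = N*t - s := by omega
    show A (N + N*t - (N + s)) = A (N*t - s)
    rw [e1]
  have hCST : ∀ k, ColStoch (T k) := by
    intro k
    rw [hT]
    apply colStoch_listProd
    intro M hM
    simp only [List.mem_map, List.mem_range] at hM
    obtain ⟨s, hs, rfl⟩ := hM
    exact ⟨hnonneg _ (by omega), hcol _ (by omega)⟩
  have hCSW : ∀ t, 1 ≤ t → ColStoch (W t) := by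
    intro t ht
    rw [hW]
    apply colStoch_listProd
    intro M hM
    simp only [List.mem_map, List.mem_range] at hM
    obtain ⟨s, hs, rfl⟩ := hM
    have hNt : N ≤ N * t := Nat.le_mul_of_pos_right N ht
    exact ⟨hnonneg _ (by omega), hcol _ (by omega)⟩
  have key : ∀ k (i1 i2 j : Fin n), |T k j i1 - T k j i2| ≤ (1-α)^(k/N) := by
    intro k i1 i2 j
    set w : Fin n → ℝ := fun i => (if i = i1 then (1:ℝ) else 0) - (if i = i2 then 1 else 0)
      with hw
    set v : ℕ → Fin n → ℝ := fun m => (T m).mulVec w with hv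
    have hvj : ∀ m (j' : Fin n), v m j' = T m j' i1 - T m j' i2 := by
      intro m j'
      simp [hv, hw, Matrix.mulVec, dotProduct, mul_sub, Finset.sum_sub_distrib,
        mul_ite, Finset.sum_ite_eq']
    have hsum : ∀ m, ∑ j', v m j' = 0 := by
      intro m
      simp only [hvj, Finset.sum_sub_distrib, (hCST m).2 i1, (hCST m).2 i2, sub_self]
    have hS2 : ∀ m, ∑ j', |v m j'| ≤ 2 := by
      intro m
      calc ∑ j', |v m j'| ≤ ∑ j' : Fin n, (T m j' i1 + T m j' i2) := by
            apply Finset.sum_le_sum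
            intro j' _
            rw [hvj]
            refine le_trans (abs_sub _ _) ?_
            rw [abs_of_nonneg ((hCST m).1 j' i1), abs_of_nonneg ((hCST m).1 j' i2)]
        _ = 2 := by rw [Finset.sum_add_distrib, (hCST m).2 i1, (hCST m).2 i2]; norm_num
    have hmono : ∀ m, ∑ j', |v (m+1) j'| ≤ ∑ j', |v m j'| := by
      intro m
      have hvm : v (m+1) = (A (m+1)).mulVec (v m) := by
        simp only [hv, hTsucc m, ← Matrix.mulVec_mulVec]
      rw [hvm]
      exact nonexpand ⟨hnonneg _ (by omega), hcol _ (by omega)⟩ _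
    have hmono' : ∀ a b, a ≤ b → ∑ j', |v b j'| ≤ ∑ j', |v a j'| := by
      intro a b h
      induction h with
      | refl => exact le_rfl
      | step _ ih => exact le_trans (hmono _) ih
    have hblock : ∀ t, ∑ j', |v (N*t) j'| ≤ 2*(1-α)^t := by
      intro t
      induction t with
      | zero => simpa using hS2 0
      | succ t iht =>
        obtain ⟨r, hr⟩ := hrow (t+1) (by omega)
        have hvb : v (N*(t+1)) = (W (t+1)).mulVec (v (N*t)) := by
          simp only [hv, hTblock t, ← Matrix.mulVec_mulVec]
        rw [hvb]
        calc ∑ j', |((W (t+1)).mulVec (v (N*t))) j'| ≤ (1-α) * ∑ j', |v (N*t) j'| :=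
              contract (hCSW (t+1) (by omega)) hr hα1 _ (hsum _)
          _ ≤ (1-α)*(2*(1-α)^t) :=
              mul_le_mul_of_nonneg_left iht (by linarith)
          _ = 2*(1-α)^(t+1) := by ring
    have hk : ∑ j', |v k j'| ≤ 2*(1-α)^(k/N) := by
      refine le_trans (hmono' (N*(k/N)) k ?_) (hblock (k/N))
      calc N * (k/N) = k/N * N := by ring
        _ ≤ k := Nat.div_mul_le_self k N
    have hhalf : 2 * |v k j| ≤ ∑ j', |v k j'| := by
      have h0 : v k j = -∑ j' ∈ Finset.univ.erase j, v k j' := by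
        have h1 := Finset.add_sum_erase Finset.univ (v k) (Finset.mem_univ j)
        rw [hsum k] at h1
        linarith
      have h2 : |v k j| ≤ ∑ j' ∈ Finset.univ.erase j, |v k j'| := by
        rw [h0, abs_neg]
        exact Finset.abs_sum_le_sum_abs _ _
      have h3 := Finset.add_sum_erase Finset.univ (fun j' => |v k j'|) (Finset.mem_univ j)
      linarith
    rw [← hvj k j]
    linarith
  haveI : Nonempty (Fin n) := ⟨⟨0, by omega⟩⟩
  have z : Fin n := ⟨0, by omega⟩
  have hec : ∀ k, ergCoeff (T k) ≤ (1-α)^(k/N) := by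
    intro k
    exact ciSup_le fun j => ciSup_le fun i1 => ciSup_le fun i2 => key k i1 i2 j
  have hnn : ∀ k, 0 ≤ ergCoeff (T k) := by
    intro k
    refine le_ciSup_of_le (Set.finite_range _).bddAbove z ?_
    refine le_ciSup_of_le (Set.finite_range _).bddAbove z ?_
    refine le_ciSup_of_le (Set.finite_range _).bddAbove z ?_
    exact abs_nonneg _
  refine ⟨fun k _ => hec k, ?_, ?_⟩
  · intro hlt
    have h2 : Tendsto (fun t : ℕ => (1-α)^t) atTop (𝓝 0) :=
      tendsto_pow_atTop_nhds_zero_of_lt_one (by linarith) (by linarith)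
    have h3 : Tendsto (fun k : ℕ => k / N) atTop atTop :=
      tendsto_atTop_atTop.mpr fun b => ⟨b*N, fun a ha => (Nat.le_div_iff_mul_le hNpos).mpr ha⟩
    exact squeeze_zero hnn hec (h2.comp h3)
  · intro h1 k hk
    refine le_antisymm ?_ (hnn k)
    have h2 := hec k
    have h3 : 1 ≤ k / N := (Nat.one_le_div_iff hNpos).mpr hk
    rw [h1, sub_self, zero_pow (by omega)] at h2
    exact h2
end

section
/- Let G = (V, E) be a strongly connected directed graph on V = {1,…,N} with N ≥ 2 (no self-loops; (j,i) ∈ E means node i can send to node j). For k = 1,…,N let A_k be a 2N×2N real matrix with nonnegative entries of the block form A_k = [[P(k), I_N],[Λ(k), 0]], where P(k) is N×N with P(k)_{ii} > 0 for every i and P(k)_{ij} > 0 whenever (i,j) ∈ E, and Λ(k) is diagonal with strictly positive diagonal entries. Then in the product W = A_N · A_{N−1} ⋯ A_1, every entry W_{j,u} with j ∈ {1,…,N} and u ∈ {1,…,2N} is strictly positive; in particular W has at least one row with all entries strictly positive. -/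
open Finset Matrix

/-- Walks of exact length `m` from `j` to `i` under relation `R`. -/
def chainW {α : Type*} (R : α → α → Prop) : ℕ → α → α → Prop
  | 0, j, i => j = i
  | m + 1, j, i => ∃ k, R j k ∧ chainW R m k i

theorem chainW_refl {α : Type*} {R : α → α → Prop} (hR : ∀ a, R a a) :
    ∀ (m : ℕ) (a : α), chainW R m a a
  | 0, _ => rfl
  | m + 1, a => ⟨a, hR a, chainW_refl hR m a⟩

theorem chainW_mono {α : Type*} {R : α → α → Prop} (hR : ∀ a, R a a)
    {m m' : ℕ} {j i : α} (h : chainW R m j i) (hm : m ≤ m') : chainW R m' j i := by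
  induction m' with
  | zero => exact (Nat.le_zero.mp hm) ▸ h
  | succ n ih =>
    rcases Nat.lt_or_ge m (n + 1) with h1 | h2
    · exact ⟨j, hR j, ih (by omega)⟩
    · have : m = n + 1 := by omega
      exact this ▸ h

theorem chainW_append {α : Type*} {R : α → α → Prop} :
    ∀ {m : ℕ} {x y z : α}, chainW R m x y → R y z → chainW R (m + 1) x z
  | 0, x, y, z, h, hyz => ⟨z, h ▸ hyz, rfl⟩
  | m + 1, x, y, z, ⟨k, hk, hc⟩, hyz => ⟨k, hk, chainW_append hc hyz⟩

theorem chainW_iff_fn {α : Type*} {R : α → α → Prop} :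
    ∀ {m : ℕ} {j i : α}, chainW R m j i ↔
      ∃ w : ℕ → α, w 0 = j ∧ w m = i ∧ ∀ t < m, R (w t) (w (t + 1)) := by
  intro m
  induction m with
  | zero =>
    intro j i
    constructor
    · rintro rfl; exact ⟨fun _ => j, rfl, rfl, fun t ht => absurd ht (by omega)⟩
    · rintro ⟨w, h0, hm, _⟩; exact h0 ▸ hm
  | succ n ih =>
    intro j i
    constructor
    · rintro ⟨k, hk, hc⟩
      obtain ⟨w, h0, hm, hs⟩ := ih.mp hc
      refine ⟨fun t => match t with | 0 => j | t + 1 => w t, rfl, hm, ?_⟩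
      intro t ht
      match t with
      | 0 => simpa [h0] using hk
      | t + 1 => exact hs t (by omega)
    · rintro ⟨w, h0, hm, hs⟩
      refine ⟨w 1, h0 ▸ hs 0 (by omega), ih.mpr ⟨fun t => w (t + 1), rfl, hm, ?_⟩⟩
      intro t ht
      exact hs (t + 1) (by omega)

theorem chainW_shorten {α : Type*} [Fintype α] {R : α → α → Prop} :
    ∀ (m : ℕ) {j i : α}, chainW R m j i →
      ∃ m' ≤ Fintype.card α - 1, chainW R m' j i := by
  intro m
  induction m using Nat.strong_induction_on with
  | _ m IH =>
    intro j i h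
    rcases Nat.lt_or_ge m (Fintype.card α) with hm | hm
    · exact ⟨m, by omega, h⟩
    · obtain ⟨w, h0, hmw, hs⟩ := chainW_iff_fn.mp h
      obtain ⟨t1, t2, hne, heq⟩ :=
        Fintype.exists_ne_map_eq_of_card_lt (fun t : Fin (m + 1) => w t.val) (by simp; omega)
      wlog hlt : (t1 : ℕ) < (t2 : ℕ) generalizing t1 t2
      · exact this t2 t1 hne.symm heq.symm (by omega)
      obtain ⟨s1, hs1⟩ : ∃ s1 : ℕ, (t1 : ℕ) = s1 := ⟨_, rfl⟩
      obtain ⟨s2, hs2⟩ : ∃ s2 : ℕ, (t2 : ℕ) = s2 := ⟨_, rfl⟩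
      have hb2 : s2 ≤ m := by omega
      rw [hs1, hs2] at heq hlt
      have hchain : chainW R (m - (s2 - s1)) j i := by
        refine chainW_iff_fn.mpr ⟨fun t => if t ≤ s1 then w t else w (t + (s2 - s1)), ?_, ?_, ?_⟩
        · simp [h0]
        · by_cases hc : m - (s2 - s1) ≤ s1
          · have h1 : m - (s2 - s1) = s1 := by omega
            have h2 : s2 = m := by omega
            simp only
            rw [h1, if_pos le_rfl, heq, h2, hmw]
          · simp only [if_neg hc]
            have h3 : m - (s2 - s1) + (s2 - s1) = m := by omega
            rw [h3, hmw]
        · intro t ht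
          simp only
          by_cases hc1 : t + 1 ≤ s1
          · rw [if_pos (by omega), if_pos hc1]
            exact hs t (by omega)
          · by_cases hc2 : t ≤ s1
            · have h1 : t = s1 := by omega
              rw [if_pos hc2, if_neg hc1, h1, heq]
              have h2 : s1 + 1 + (s2 - s1) = s2 + 1 := by omega
              rw [h2]
              exact hs s2 (by omega)
            · rw [if_neg hc2, if_neg (by omega : ¬ t + 1 ≤ s1)]
              have h2 : t + 1 + (s2 - s1) = (t + (s2 - s1)) + 1 := by omega
              rw [h2]
              exact hs (t + (s2 - s1)) (by omega)
      exact IH (m - (s2 - s1)) (by omega) hchain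

theorem listProd_nonneg {n : Type*} [Fintype n] [DecidableEq n] :
    ∀ (L : List (Matrix n n ℝ)), (∀ M ∈ L, ∀ a b, 0 ≤ M a b) →
      ∀ a b, 0 ≤ L.prod a b := by
  intro L
  induction L with
  | nil =>
    intro _ a b
    rw [List.prod_nil, Matrix.one_apply]
    split <;> norm_num
  | cons M L ih =>
    intro h a b
    rw [List.prod_cons, Matrix.mul_apply]
    refine Finset.sum_nonneg fun x _ => mul_nonneg (h M (by simp) a x) ?_
    exact ih (fun M' hM' => h M' (by simp [hM'])) x b

theorem listProd_pos {n : Type*} [Fintype n] [DecidableEq n] (R : n → n → Prop) :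
    ∀ (L : List (Matrix n n ℝ)), (∀ M ∈ L, ∀ a b, 0 ≤ M a b) →
      (∀ M ∈ L, ∀ a b, R a b → 0 < M a b) →
      ∀ {j i : n}, chainW R L.length j i → 0 < L.prod j i := by
  intro L
  induction L with
  | nil =>
    intro _ _ j i hc
    have : j = i := hc
    subst this
    simp [Matrix.one_apply]
  | cons M L ih =>
    intro h0 h1 j i hc
    obtain ⟨k, hk, hc⟩ := hc
    rw [List.prod_cons, Matrix.mul_apply]
    refine Finset.sum_pos' (fun x _ => mul_nonneg (h0 M (by simp) j x)
      (listProd_nonneg L (fun M' hM' => h0 M' (by simp [hM'])) x i)) ?_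
    refine ⟨k, Finset.mem_univ k, mul_pos (h1 M (by simp) j k hk) ?_⟩
    exact ih (fun M' hM' => h0 M' (by simp [hM'])) (fun M' hM' => h1 M' (by simp [hM'])) hc
/-- The augmented relation on actual ⊕ virtual nodes. -/
def sumRel {N : ℕ} (E : Fin N → Fin N → Prop) :
    (Fin N ⊕ Fin N) → (Fin N ⊕ Fin N) → Prop
  | Sum.inl a, Sum.inl b => a = b ∨ E a b
  | Sum.inl a, Sum.inr b => a = b
  | Sum.inr a, Sum.inl b => a = b
  | Sum.inr _, Sum.inr _ => False

theorem chainW_cast {α : Type*} {R : α → α → Prop} {m m' : ℕ} {j i : α}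
    (h : chainW R m j i) (e : m = m') : chainW R m' j i := e ▸ h

theorem transGen_chainW {α : Type*} {E : α → α → Prop} {q p : α}
    (h : Relation.TransGen (fun a b => E b a) q p) :
    ∃ m, chainW (fun a b => a = b ∨ E a b) m p q := by
  induction h with
  | single h' => exact ⟨1, q, Or.inr h', rfl⟩
  | tail _ h' ih =>
    obtain ⟨m, hm⟩ := ih
    exact ⟨m + 1, _, Or.inr h', hm⟩

/-- Over a strongly connected digraph (edge `(j,i) ∈ E`, i.e. `E j i`, meaning node `i`
can send to node `j`), the product `W = A_N ⋯ A_1` of the nonnegative augmented matrices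
`A_k = [[P(k), I],[Λ(k), 0]]` — where `P(k)` has positive diagonal and positive entries on
all edges, and `Λ(k)` is diagonal with positive diagonal — has every entry `W_{j,u}`
with `j` an actual node (first block) strictly positive; in particular `W` has a row
with all entries strictly positive. -/
theorem stmt_7 (N : ℕ) (hN : 2 ≤ N)
    (E : Fin N → Fin N → Prop)
    (hnoself : ∀ i, ¬ E i i)
    (hconn : ∀ i j : Fin N, i ≠ j → Relation.TransGen (fun a b => E b a) i j)
    (P : Fin N → Matrix (Fin N) (Fin N) ℝ)
    (Λ : Fin N → Fin N → ℝ)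
    (hPnonneg : ∀ k i j, 0 ≤ P k i j)
    (hPdiag : ∀ k i, 0 < P k i i)
    (hPedge : ∀ k i j, E i j → 0 < P k i j)
    (hΛpos : ∀ k i, 0 < Λ k i)
    (A : Fin N → Matrix (Fin N ⊕ Fin N) (Fin N ⊕ Fin N) ℝ)
    (hA : ∀ k, A k = Matrix.fromBlocks (P k) (1 : Matrix (Fin N) (Fin N) ℝ)
        (Matrix.diagonal (Λ k)) (0 : Matrix (Fin N) (Fin N) ℝ))
    (W : Matrix (Fin N ⊕ Fin N) (Fin N ⊕ Fin N) ℝ)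
    (hW : W = ((List.ofFn A).reverse).prod) :
    ∀ (j : Fin N) (u : Fin N ⊕ Fin N), 0 < W (Sum.inl j) u := by
  subst hW
  intro j u
  have hRrefl : ∀ a : Fin N, a = a ∨ E a a := fun a => Or.inl rfl
  -- every pair is connected by a walk of length N - 1 (allowing self-loops)
  have hchainR : ∀ p q : Fin N, chainW (fun a b => a = b ∨ E a b) (N - 1) p q := by
    intro p q
    by_cases hpq : p = q
    · subst hpq; exact chainW_refl hRrefl _ p
    · obtain ⟨m, hm⟩ := transGen_chainW (hconn q p (fun h => hpq h.symm))
      obtain ⟨m', hm', hc⟩ := chainW_shorten m hm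
      rw [Fintype.card_fin] at hm'
      exact chainW_mono hRrefl hc hm'
  -- lifting walks to the augmented graph
  have hlift : ∀ (m : ℕ) (p q : Fin N), chainW (fun a b => a = b ∨ E a b) m p q →
      chainW (sumRel E) m (Sum.inl p) (Sum.inl q) := by
    intro m
    induction m with
    | zero => intro p q h; exact congrArg Sum.inl h
    | succ n ih =>
      rintro p q ⟨k, hk, hc⟩
      exact ⟨Sum.inl k, hk, ih k q hc⟩
  -- entrywise facts about the A k
  have hAnn : ∀ k (x y : Fin N ⊕ Fin N), 0 ≤ A k x y := by
    intro k x y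
    rw [hA k]
    rcases x with a | a <;> rcases y with b | b
    · simpa using hPnonneg k a b
    · simp only [Matrix.fromBlocks_apply₁₂, Matrix.one_apply]
      split <;> norm_num
    · simp only [Matrix.fromBlocks_apply₂₁, Matrix.diagonal_apply]
      split
      · exact (hΛpos k a).le
      · exact le_rfl
    · simp
  have hApos : ∀ k (x y : Fin N ⊕ Fin N), sumRel E x y → 0 < A k x y := by
    intro k x y hxy
    rw [hA k]
    rcases x with a | a <;> rcases y with b | b
    · rcases hxy with rfl | h
      · simpa using hPdiag k a
      · simpa using hPedge k a b h
    · obtain rfl : a = b := hxy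
      simp [Matrix.one_apply]
    · obtain rfl : a = b := hxy
      simpa using hΛpos k a
    · exact absurd hxy not_false
  have hmemnn : ∀ M ∈ (List.ofFn A).reverse, ∀ x y, 0 ≤ M x y := by
    intro M hM
    simp only [List.mem_reverse, List.mem_ofFn, Set.mem_range] at hM
    obtain ⟨k, rfl⟩ := hM
    exact hAnn k
  have hmempos : ∀ M ∈ (List.ofFn A).reverse, ∀ x y, sumRel E x y → 0 < M x y := by
    intro M hM
    simp only [List.mem_reverse, List.mem_ofFn, Set.mem_range] at hM
    obtain ⟨k, rfl⟩ := hM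
    exact hApos k
  have hlen : ((List.ofFn A).reverse).length = N := by simp
  refine listProd_pos (sumRel E) _ hmemnn hmempos ?_
  rw [hlen]
  rcases u with i | i
  · exact hlift N j i (chainW_mono hRrefl (hchainR j i) (by omega))
  · have h1 : chainW (sumRel E) (N - 1) (Sum.inl j) (Sum.inl i) := hlift _ j i (hchainR j i)
    have h2 : chainW (sumRel E) (N - 1 + 1) (Sum.inl j) (Sum.inr i) :=
      chainW_append h1 rfl
    have h3 : N - 1 + 1 = N := by omega
    exact chainW_cast h2 h3
end

section
/- Let N ≥ 2 and fix distinct nodes i, m ∈ {1,…,N}. Let p′ : {1,…,N}×{1,…,N} → ℝ be a weight matrix and let x′^α, x′^β : {1,…,N} → ℝ be substate vectors with x′^α_m ≠ 0, and let e ∈ ℝ. Define modified substates x″^α_n = x′^α_n for all n, x″^β_i = x′^β_i + 2e, x″^β_m = x′^β_m − 2e, and x″^β_q = x′^β_q for all q ∉ {i, m}; define modified weights p″_{mm} = (p′_{mm}·x′^α_m + 2e)/x′^α_m, p″_{im} = (p′_{im}·x′^α_m − 2e)/x′^α_m, p″_{qm} = p′_{qm} for q ∉ {i, m}, and p″_{nj}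 = p′_{nj} for all n and all j ≠ m. Then for every node n ∈ {1,…,N}: Σ_{j=1}^N p″_{nj}·x″^α_j + x″^β_n = Σ_{j=1}^N p′_{nj}·x′^α_j + x′^β_n, and moreover the transmitted values satisfy p″_{qm}·x″^α_m = p′_{qm}·x′^α_m for every q ∉ {i, m} and p″_{nj}·x″^α_j = p′_{nj}·x′^α_j for every j ≠ m and every n, while (x″^α_i + x″^β_i)/2 = (x′^α_i + x′^β_i)/2 + e. -/
open Finset

/-- Situation I (m an in-neighbor of i) in the proof of Theorem 2: perturbing node `i`'s
initial value by `e` (via its reserved substate) while compensating at node `m` and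
rescaling the weights on column `m` leaves all step-1 exchanged substates
`Σ_j p_{nj} x^α_j + x^β_n` and all transmitted values visible to other nodes unchanged,
while the initial value of node `i` changes by exactly `e`. -/
theorem stmt_17 (N : ℕ) (hN : 2 ≤ N) (i m : Fin N) (him : i ≠ m)
    (p' : Fin N → Fin N → ℝ) (xα' xβ' : Fin N → ℝ) (hxm : xα' m ≠ 0) (e : ℝ)
    (p'' : Fin N → Fin N → ℝ) (xα'' xβ'' : Fin N → ℝ)
    (hα : ∀ n, xα'' n = xα' n)
    (hβi : xβ'' i = xβ' i + 2 * e)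
    (hβm : xβ'' m = xβ' m - 2 * e)
    (hβq : ∀ q, q ≠ i → q ≠ m → xβ'' q = xβ' q)
    (hpmm : p'' m m = (p' m m * xα' m + 2 * e) / xα' m)
    (hpim : p'' i m = (p' i m * xα' m - 2 * e) / xα' m)
    (hpqm : ∀ q, q ≠ i → q ≠ m → p'' q m = p' q m)
    (hpnj : ∀ n j, j ≠ m → p'' n j = p' n j) :
    (∀ n, ∑ j, p'' n j * xα'' j + xβ'' n = ∑ j, p' n j * xα' j + xβ' n) ∧
    (∀ q, q ≠ i → q ≠ m → p'' q m * xα'' m = p' q m * xα' m) ∧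
    (∀ n j, j ≠ m → p'' n j * xα'' j = p' n j * xα' j) ∧
    (xα'' i + xβ'' i) / 2 = (xα' i + xβ' i) / 2 + e := by

  have key : ∀ n, p'' n m * xα' m = p' n m * xα' m +
      (if n = m then 2*e else if n = i then -(2*e) else 0) := by
    intro n
    by_cases hnm : n = m
    · subst hnm
      rw [hpmm, div_mul_cancel₀ _ hxm]
      simp
    · by_cases hni : n = i
      · subst hni
        rw [hpim, div_mul_cancel₀ _ hxm]
        simp [hnm]; ring
      · rw [hpqm n hni hnm]; simp [hnm, hni]
  refine ⟨?_, ?_, ?_, ?_⟩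
  · intro n
    have hsum : ∑ j, p'' n j * xα'' j =
        ∑ j, p' n j * xα' j + (if n = m then 2*e else if n = i then -(2*e) else 0) := by
      rw [← Finset.sum_add_sum_compl {m}, ← Finset.sum_add_sum_compl (s := {m}) (fun j => p' n j * xα' j)]
      have h1 : ∀ j ∈ ({m}ᶜ : Finset (Fin N)), p'' n j * xα'' j = p' n j * xα' j := by
        intro j hj
        rw [hα, hpnj n j (by simpa using hj)]
      rw [Finset.sum_congr rfl h1]
      simp only [Finset.sum_singleton, hα]
      rw [key n]; ring
    rw [hsum]
    by_cases hnm : n = m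
    · subst hnm; rw [hβm]; simp
    · by_cases hni : n = i
      · subst hni; rw [hβi]; simp [hnm]; ring
      · rw [hβq n hni hnm]; simp [hnm, hni]
  · intro q hqi hqm
    rw [hα, hpqm q hqi hqm]
  · intro n j hjm
    rw [hα, hpnj n j hjm]
  · rw [hα, hβi]; ring
end

section
/- Let N ≥ 2 and fix distinct nodes i, m ∈ {1,…,N}. Let p′ : {1,…,N}×{1,…,N} → ℝ be a weight matrix and let x′^α, x′^β : {1,…,N} → ℝ be substate vectors with x′^α_i ≠ 0, and let e ∈ ℝ. Define modified substates x″^α_n = x′^α_n for all n, x″^β_i = x′^β_i + 2e, x″^β_m = x′^β_m − 2e, and x″^β_q = x′^β_q for all q ∉ {i, m}; define modified weights p″_{ii} = (p′_{ii}·x′^α_i − 2e)/x′^α_i, p″_{mi} = (p′_{mi}·x′^α_i + 2e)/x′^α_i, p″_{qi} = p′_{qi} for q ∉ {i, m}, and p″_{nj} = p′_{nj} for all n and all j ≠ i. Then for every node n ∈ {1,…,N}: Σ_{j=1}^N p″_{nj}·x″^α_j + x″^β_n = Σ_{j=1}^N p′_{nj}·x′^α_j + x′^β_n, and moreover p″_{qi}·x″^α_i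 = p′_{qi}·x′^α_i for every q ∉ {i, m} and p″_{nj}·x″^α_j = p′_{nj}·x′^α_j for every j ≠ i and every n, while (x″^α_i + x″^β_i)/2 = (x′^α_i + x′^β_i)/2 + e. -/
open Finset

/-- Situation II (m an out-neighbor of i) in the proof of Theorem 2: perturbing node `i`'s
initial value by `e` (via its reserved substate) while compensating at node `m` and
rescaling the weights on column `i` leaves all step-1 exchanged substates
`Σ_j p_{nj} x^α_j + x^β_n` and all transmitted values visible to other nodes unchanged,
while the initial value of node `i` changes by exactly `e`. -/
theorem stmt_18 (N : ℕ) (hN : 2 ≤ N) (i m : Fin N) (him : i ≠ m)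
    (p' : Fin N → Fin N → ℝ) (xα' xβ' : Fin N → ℝ) (hxi : xα' i ≠ 0) (e : ℝ)
    (p'' : Fin N → Fin N → ℝ) (xα'' xβ'' : Fin N → ℝ)
    (hα : ∀ n, xα'' n = xα' n)
    (hβi : xβ'' i = xβ' i + 2 * e)
    (hβm : xβ'' m = xβ' m - 2 * e)
    (hβq : ∀ q, q ≠ i → q ≠ m → xβ'' q = xβ' q)
    (hpii : p'' i i = (p' i i * xα' i - 2 * e) / xα' i)
    (hpmi : p'' m i = (p' m i * xα' i + 2 * e) / xα' i)
    (hpqi : ∀ q, q ≠ i → q ≠ m → p'' q i = p' q i)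
    (hpnj : ∀ n j, j ≠ i → p'' n j = p' n j) :
    (∀ n, ∑ j, p'' n j * xα'' j + xβ'' n = ∑ j, p' n j * xα' j + xβ' n) ∧
    (∀ q, q ≠ i → q ≠ m → p'' q i * xα'' i = p' q i * xα' i) ∧
    (∀ n j, j ≠ i → p'' n j * xα'' j = p' n j * xα' j) ∧
    (xα'' i + xβ'' i) / 2 = (xα' i + xβ' i) / 2 + e := by
  have hsum : ∀ n, ∑ j, p'' n j * xα'' j
      = p'' n i * xα' i + ∑ j ∈ univ.erase i, p' n j * xα' j := by
    intro n
    rw [← Finset.add_sum_erase _ _ (mem_univ i), hα]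
    congr 1
    exact Finset.sum_congr rfl fun j hj => by
      rw [hpnj n j (Finset.ne_of_mem_erase hj), hα]
  have hsum' : ∀ n, ∑ j, p' n j * xα' j
      = p' n i * xα' i + ∑ j ∈ univ.erase i, p' n j * xα' j := fun n =>
    (Finset.add_sum_erase _ _ (mem_univ i)).symm
  refine ⟨?_, ?_, ?_, ?_⟩
  · intro n
    rw [hsum, hsum']
    rcases eq_or_ne n i with rfl | hni
    · rw [hpii, hβi, div_mul_cancel₀ _ hxi]; ring
    rcases eq_or_ne n m with rfl | hnm
    · rw [hpmi, hβm, div_mul_cancel₀ _ hxi]; ring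
    · rw [hpqi n hni hnm, hβq n hni hnm]
  · intro q hqi hqm; rw [hpqi q hqi hqm, hα]
  · intro n j hj; rw [hpnj n j hj, hα]
  · rw [hα, hβi]; ring
end
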